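/- Let f:ℕ→ℝ with Σⱼ f(j)² = 1. Then (sup_k f(k)²)² ≤ Σⱼ f(j)⁴ ≤ sup_k f(k)². Consequently, if Y_j are independent centered variables with unit variance and common fourth moment λ≠3, and F=Σⱼf(j)Yⱼ, then sup_k f(k)² ≤ √(|E[F⁴]−3|)/√(|λ−3|). -/

import Mathlib

open MeasureTheory ProbabilityTheory

open Filter
open scoped ENNReal NNReal Topology

section Helpers
variable {Ω : Type*} [MeasurableSpace Ω] {μ : Measure Ω} [IsProbabilityMeasure μ]

lemma aux_int_pow {X : Ω → ℝ} (hX : MemLp X 4 μ) {k : ℕ} (hk4 : k ≤ 4) :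
    Integrable (fun ω => X ω ^ k) μ := by
  have h4 : Integrable (fun ω => |X ω| ^ (4 : ℕ)) μ := by
    have h := hX.norm_rpow (by norm_num) (by norm_num)
    rw [memLp_one_iff_integrable] at h
    have : (fun x => ‖X x‖ ^ (4 : ℝ≥0∞).toReal) = fun ω => |X ω| ^ (4 : ℕ) := by
      funext ω
      rw [Real.norm_eq_abs, show ((4 : ℝ≥0∞).toReal) = ((4 : ℕ) : ℝ) by norm_num,
        Real.rpow_natCast]
    rwa [this] at h
  refine Integrable.mono' (h4.add (integrable_const 1)) ?_ ?_
  · exact (hX.1.aemeasurable.pow_const k).aestronglyMeasurable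
  · refine Eventually.of_forall fun ω => ?_
    rw [Real.norm_eq_abs, abs_pow]
    simp only [Pi.add_apply]
    rcases le_total (|X ω|) 1 with h | h
    · have : |X ω| ^ k ≤ 1 := pow_le_one₀ (abs_nonneg _) h
      nlinarith [pow_nonneg (abs_nonneg (X ω)) 4]
    · have : |X ω| ^ k ≤ |X ω| ^ 4 := pow_le_pow_right₀ h hk4
      nlinarith

lemma aux_cs {R : Ω → ℝ} (hR : MemLp R 2 μ) :
    (∫ ω, R ω ∂μ) ^ 2 ≤ ∫ ω, R ω ^ 2 ∂μ := by
  have h := ProbabilityTheory.variance_nonneg R μ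
  rw [ProbabilityTheory.variance_eq_sub hR] at h
  simp only [Pi.pow_apply] at h
  linarith

lemma aux_expand {A B : Ω → ℝ} (hA : MemLp A 4 μ) (hB : MemLp B 4 μ)
    (hAB : IndepFun A B μ) (hEA : ∫ ω, A ω ∂μ = 0) (hEB : ∫ ω, B ω ∂μ = 0) :
    (∫ ω, (A ω + B ω) ∂μ = 0) ∧
    (∫ ω, (A ω + B ω) ^ 2 ∂μ = ∫ ω, A ω ^ 2 ∂μ + ∫ ω, B ω ^ 2 ∂μ) ∧
    (∫ ω, (A ω + B ω) ^ 4 ∂μ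
      = ∫ ω, A ω ^ 4 ∂μ + 6 * ((∫ ω, A ω ^ 2 ∂μ) * ∫ ω, B ω ^ 2 ∂μ) + ∫ ω, B ω ^ 4 ∂μ) := by
  have intA : ∀ k, k ≤ 4 → Integrable (fun ω => A ω ^ k) μ := fun k hk => aux_int_pow hA hk
  have intB : ∀ k, k ≤ 4 → Integrable (fun ω => B ω ^ k) μ := fun k hk => aux_int_pow hB hk
  have hABk : ∀ a b : ℕ, IndepFun (fun ω => A ω ^ a) (fun ω => B ω ^ b) μ := fun a b =>
    hAB.comp (measurable_id.pow_const a) (measurable_id.pow_const b)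
  have intM : ∀ a b : ℕ, a ≤ 4 → b ≤ 4 → Integrable (fun ω => A ω ^ a * B ω ^ b) μ := by
    intro a b ha hb
    exact (hABk a b).integrable_mul (intA a ha) (intB b hb)
  have EM : ∀ a b : ℕ, (∫ ω, A ω ^ a * B ω ^ b ∂μ) = (∫ ω, A ω ^ a ∂μ) * ∫ ω, B ω ^ b ∂μ := by
    intro a b
    exact (hABk a b).integral_fun_mul_eq_mul_integral ((hA.1.aemeasurable.pow_const a).aestronglyMeasurable)
      ((hB.1.aemeasurable.pow_const b).aestronglyMeasurable)
  have intA1 : Integrable A μ := by simpa using intA 1 (by norm_num)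
  have intB1 : Integrable B μ := by simpa using intB 1 (by norm_num)
  refine ⟨?_, ?_, ?_⟩
  · rw [integral_add intA1 intB1, hEA, hEB, add_zero]
  · have e : ∀ ω, (A ω + B ω) ^ 2 = A ω ^ 2 + (2 * (A ω ^ 1 * B ω ^ 1) + B ω ^ 2) := by
      intro ω; ring
    rw [show (fun ω => (A ω + B ω) ^ 2) = fun ω => A ω ^ 2 + (2 * (A ω ^ 1 * B ω ^ 1) + B ω ^ 2)
        from funext e]
    have g2 : Integrable (fun ω => 2 * (A ω ^ 1 * B ω ^ 1) + B ω ^ 2) μ :=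
      ((intM 1 1 (by norm_num) (by norm_num)).const_mul 2).add (intB 2 (by norm_num))
    rw [integral_add (intA 2 (by norm_num)) g2,
      integral_add ((intM 1 1 (by norm_num) (by norm_num)).const_mul 2) (intB 2 (by norm_num)),
      integral_const_mul, EM 1 1]
    simp only [pow_one, hEA, hEB]
    ring
  · have e : ∀ ω, (A ω + B ω) ^ 4 = A ω ^ 4 + (4 * (A ω ^ 3 * B ω ^ 1) +
        (6 * (A ω ^ 2 * B ω ^ 2) + (4 * (A ω ^ 1 * B ω ^ 3) + B ω ^ 4))) := by
      intro ω; ring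
    rw [show (fun ω => (A ω + B ω) ^ 4) = fun ω => A ω ^ 4 + (4 * (A ω ^ 3 * B ω ^ 1) +
        (6 * (A ω ^ 2 * B ω ^ 2) + (4 * (A ω ^ 1 * B ω ^ 3) + B ω ^ 4))) from funext e]
    have i31 := (intM 3 1 (by norm_num) (by norm_num)).const_mul 4
    have i22 := (intM 2 2 (by norm_num) (by norm_num)).const_mul 6
    have i13 := (intM 1 3 (by norm_num) (by norm_num)).const_mul 4
    have g4 : Integrable (fun ω => 4 * (A ω ^ 3 * B ω ^ 1) +
        (6 * (A ω ^ 2 * B ω ^ 2) + (4 * (A ω ^ 1 * B ω ^ 3) + B ω ^ 4))) μ :=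
      i31.add (i22.add (i13.add (intB 4 le_rfl)))
    have g3 : Integrable (fun ω => 6 * (A ω ^ 2 * B ω ^ 2) +
        (4 * (A ω ^ 1 * B ω ^ 3) + B ω ^ 4)) μ := i22.add (i13.add (intB 4 le_rfl))
    have g2' : Integrable (fun ω => 4 * (A ω ^ 1 * B ω ^ 3) + B ω ^ 4) μ :=
      i13.add (intB 4 le_rfl)
    rw [integral_add (intA 4 le_rfl) g4,
      integral_add i31 g3,
      integral_add i22 g2',
      integral_add i13 (intB 4 le_rfl),
      integral_const_mul, integral_const_mul, integral_const_mul, EM 3 1, EM 2 2, EM 1 3]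
    simp only [pow_one, hEA, hEB]
    ring

lemma aux_fatou {G : ℕ → Ω → ℝ} {g : Ω → ℝ} {c : ℝ}
    (hGint : ∀ n, Integrable (G n) μ) (hnn : ∀ n ω, 0 ≤ G n ω)
    (htend : ∀ᵐ ω ∂μ, Tendsto (fun n => G n ω) atTop (𝓝 (g ω)))
    (hgint : Integrable g μ)
    (htendI : Tendsto (fun n => ∫ ω, G n ω ∂μ) atTop (𝓝 c)) :
    ∫ ω, g ω ∂μ ≤ c := by
  have hgnn : 0 ≤ᵐ[μ] g := by
    filter_upwards [htend] with ω h
    exact le_of_tendsto_of_tendsto' tendsto_const_nhds h (fun n => hnn n ω)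
  have hc : 0 ≤ c :=
    le_of_tendsto_of_tendsto' tendsto_const_nhds htendI
      (fun n => integral_nonneg (hnn n))
  have h1 : ENNReal.ofReal (∫ ω, g ω ∂μ) = ∫⁻ ω, ENNReal.ofReal (g ω) ∂μ :=
    ofReal_integral_eq_lintegral_ofReal hgint hgnn
  have h2 : (∫⁻ ω, ENNReal.ofReal (g ω) ∂μ)
      = ∫⁻ ω, Filter.liminf (fun n => ENNReal.ofReal (G n ω)) atTop ∂μ := by
    refine lintegral_congr_ae ?_
    filter_upwards [htend] with ω h
    exact ((ENNReal.tendsto_ofReal h).liminf_eq).symm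
  have h3 : (∫⁻ ω, Filter.liminf (fun n => ENNReal.ofReal (G n ω)) atTop ∂μ)
      ≤ Filter.liminf (fun n => ∫⁻ ω, ENNReal.ofReal (G n ω) ∂μ) atTop :=
    lintegral_liminf_le' (fun n => ((hGint n).aemeasurable.ennreal_ofReal))
  have h4 : Filter.liminf (fun n => ∫⁻ ω, ENNReal.ofReal (G n ω) ∂μ) atTop
      = ENNReal.ofReal c := by
    have : ∀ n, (∫⁻ ω, ENNReal.ofReal (G n ω) ∂μ) = ENNReal.ofReal (∫ ω, G n ω ∂μ) :=
      fun n => (ofReal_integral_eq_lintegral_ofReal (hGint n)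
        (Eventually.of_forall (hnn n))).symm
    simp only [this]
    exact (ENNReal.tendsto_ofReal htendI).liminf_eq
  have := h1.le.trans (h2.le.trans (h3.trans h4.le))
  rwa [ENNReal.ofReal_le_ofReal_iff hc] at this

end Helpers

lemma aux_indep_tail {Ω : Type*} {mΩ : MeasurableSpace Ω} {μ : Measure Ω}
    [IsProbabilityMeasure μ] (f : ℕ → ℝ) (Y : ℕ → Ω → ℝ) (hYmeas : ∀ j, Measurable (Y j))
    (hindep : iIndepFun Y μ) (F : Ω → ℝ) (n : ℕ)
    (hconv : ∀ᵐ ω ∂μ, Tendsto (fun m => ∑ j ∈ Finset.Ico n m, f j * Y j ω) atTop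
      (𝓝 (F ω - ∑ j ∈ Finset.range n, f j * Y j ω))) :
    IndepFun (fun ω => ∑ j ∈ Finset.range n, f j * Y j ω)
      (fun ω => F ω - ∑ j ∈ Finset.range n, f j * Y j ω) μ := by
  classical
  set A : Ω → ℝ := fun ω => ∑ j ∈ Finset.range n, f j * Y j ω with hAdef
  set Q : ℕ → Ω → ℝ := fun m ω => ∑ j ∈ Finset.Ico n m, f j * Y j ω with hQdef
  set mY : ℕ → MeasurableSpace Ω := fun j => MeasurableSpace.comap (Y j) inferInstance
    with hmYdef
  set M1 : MeasurableSpace Ω := ⨆ j ∈ {j : ℕ | j < n}, mY j with hM1def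
  set M2 : MeasurableSpace Ω := ⨆ j ∈ {j : ℕ | n ≤ j}, mY j with hM2def
  have disj : Disjoint {j : ℕ | j < n} {j : ℕ | n ≤ j} := by
    rw [Set.disjoint_left]; intro a ha hb; exact absurd (show a < n from ha) (not_lt.mpr hb)
  have hIndepM : Indep M1 M2 μ :=
    indep_iSup_of_disjoint (fun j => (hYmeas j).comap_le) hindep disj
  have hYM : ∀ (M : MeasurableSpace Ω) (S : Set ℕ), (⨆ j ∈ S, mY j) = M →
      ∀ j ∈ S, Measurable[M] (Y j) := by
    rintro M S rfl j hj
    exact Measurable.of_comap_le (le_biSup mY hj)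
  have hA_meas : Measurable[M1] A := by
    apply Finset.measurable_sum
    intro j hj
    exact (hYM M1 _ hM1def.symm j (by simpa using Finset.mem_range.mp hj)).const_mul _
  have hQ_meas : ∀ m, Measurable[M2] (Q m) := by
    intro m
    apply Finset.measurable_sum
    intro j hj
    exact (hYM M2 _ hM2def.symm j (Finset.mem_Ico.mp hj).1).const_mul _
  have hM2le : M2 ≤ mΩ := by
    rw [hM2def]; exact iSup₂_le fun j _ => (hYmeas j).comap_le
  have hset : MeasurableSet[M2] {ω | ∃ c : ℝ, Tendsto (fun m => Q m ω) atTop (𝓝 c)} :=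
    measurableSet_exists_tendsto hQ_meas
  have hμ0 : μ {ω | ∃ c : ℝ, Tendsto (fun m => Q m ω) atTop (𝓝 c)}ᶜ = 0 := by
    have h := hconv
    rw [ae_iff] at h
    refine measure_mono_null ?_ h
    intro ω hω
    simp only [Set.mem_compl_iff, Set.mem_setOf_eq] at hω ⊢
    intro hT
    exact hω ⟨_, hT⟩
  have hae' : ∀ᵐ ω ∂(μ.trim hM2le), ∃ c : ℝ, Tendsto (fun m => Q m ω) atTop (𝓝 c) := by
    rw [ae_iff]
    have : {ω | ¬ ∃ c : ℝ, Tendsto (fun m => Q m ω) atTop (𝓝 c)}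
        = {ω | ∃ c : ℝ, Tendsto (fun m => Q m ω) atTop (𝓝 c)}ᶜ := rfl
    rw [this, trim_measurableSet_eq hM2le hset.compl]
    exact hμ0
  obtain ⟨Rm, hRmmeas, htend⟩ := measurable_limit_of_tendsto_metrizable_ae (L := atTop)
    (fun m => (hQ_meas m).aemeasurable) hae'
  have htendμ : ∀ᵐ ω ∂μ, Tendsto (fun m => Q m ω) atTop (𝓝 (Rm ω)) :=
    ae_of_ae_trim hM2le htend
  have hRmR : (fun ω => F ω - A ω) =ᵐ[μ] Rm := by
    filter_upwards [htendμ, hconv] with ω h1 h2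
    exact tendsto_nhds_unique h2 h1
  have h1 : Indep (MeasurableSpace.comap A inferInstance)
      (MeasurableSpace.comap Rm inferInstance) μ :=
    indep_of_indep_of_le_left (indep_of_indep_of_le_right hIndepM hRmmeas.comap_le)
      hA_meas.comap_le
  have h2 : IndepFun A Rm μ := h1
  exact h2.congr (Filter.EventuallyEq.refl _ _) hRmR.symm

section Helpers2
variable {Ω : Type*} [MeasurableSpace Ω] {μ : Measure Ω} [IsProbabilityMeasure μ]

lemma aux_moments (f : ℕ → ℝ) (Y : ℕ → Ω → ℝ) (hYmeas : ∀ j, Measurable (Y j))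
    (hindep : iIndepFun Y μ)
    (hL4 : ∀ j, MemLp (Y j) 4 μ) (hmean : ∀ j, ∫ ω, Y j ω ∂μ = 0)
    (hvar : ∀ j, ∫ ω, (Y j ω) ^ 2 ∂μ = 1) (lam : ℝ) (h4 : ∀ j, ∫ ω, (Y j ω) ^ 4 ∂μ = lam)
    (s : Finset ℕ) :
    MemLp (fun ω => ∑ j ∈ s, f j * Y j ω) 4 μ ∧
    ∫ ω, (∑ j ∈ s, f j * Y j ω) ∂μ = 0 ∧
    ∫ ω, (∑ j ∈ s, f j * Y j ω) ^ 2 ∂μ = ∑ j ∈ s, f j ^ 2 ∧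
    ∫ ω, (∑ j ∈ s, f j * Y j ω) ^ 4 ∂μ
      = 3 * (∑ j ∈ s, f j ^ 2) ^ 2 + (lam - 3) * ∑ j ∈ s, f j ^ 4 := by
  classical
  induction s using Finset.induction with
  | empty =>
    refine ⟨by simpa using memLp_const (0 : ℝ), by simp, by simp, by simp⟩
  | insert i s hi ih =>
    obtain ⟨ihL4, ihE, ihE2, ihE4⟩ := ih
    set A : Ω → ℝ := fun ω => ∑ j ∈ s, f j * Y j ω with hAdef
    set B : Ω → ℝ := fun ω => f i * Y i ω with hBdef
    -- independence of A and B
    have hZindep : iIndepFun (fun j => fun ω => f j * Y j ω) μ :=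
      hindep.comp (fun j => fun x => f j * x) (fun j => measurable_const_mul _)
    have hAB : IndepFun A B μ := by
      have := hZindep.indepFun_finsetSum_of_notMem
        (fun j => (hYmeas j).const_mul _) hi
      have e : (∑ j ∈ s, fun ω => f j * Y j ω) = A := by
        funext ω; simp [hAdef, Finset.sum_apply]
      rwa [e] at this
    have hB4 : MemLp B 4 μ := (hL4 i).const_mul (f i)
    have hEB : ∫ ω, B ω ∂μ = 0 := by
      simp only [hBdef, integral_const_mul, hmean i, mul_zero]
    have hEB2 : ∫ ω, B ω ^ 2 ∂μ = f i ^ 2 := by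
      simp only [hBdef, mul_pow, integral_const_mul, hvar i, mul_one]
    have hEB4 : ∫ ω, B ω ^ 4 ∂μ = f i ^ 4 * lam := by
      simp only [hBdef, mul_pow, integral_const_mul, h4 i]
    obtain ⟨c1, c2, c3⟩ := aux_expand ihL4 hB4 hAB ihE hEB
    have esum : (fun ω => ∑ j ∈ insert i s, f j * Y j ω) = fun ω => A ω + B ω := by
      funext ω; rw [Finset.sum_insert hi]; ring
    rw [Finset.sum_insert hi, Finset.sum_insert hi]
    refine ⟨?_, ?_, ?_, ?_⟩
    · rw [esum]; exact ihL4.add hB4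
    · rw [show (∫ ω, (∑ j ∈ insert i s, f j * Y j ω) ∂μ) = ∫ ω, (A ω + B ω) ∂μ by rw [esum]]
      exact c1
    · rw [show (∫ ω, (∑ j ∈ insert i s, f j * Y j ω) ^ 2 ∂μ) = ∫ ω, (A ω + B ω) ^ 2 ∂μ
          by congr 1; funext ω; rw [Finset.sum_insert hi]; ring]
      rw [c2, ihE2, hEB2]; ring
    · rw [show (∫ ω, (∑ j ∈ insert i s, f j * Y j ω) ^ 4 ∂μ) = ∫ ω, (A ω + B ω) ^ 4 ∂μ
          by congr 1; funext ω; rw [Finset.sum_insert hi]; ring]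
      rw [c3, ihE4, ihE2, hEB2, hEB4]; ring

end Helpers2

/-- For `f : ℕ → ℝ` with `Σⱼ f(j)² = 1` one has
`(sup_k f(k)²)² ≤ Σⱼ f(j)⁴ ≤ sup_k f(k)²`, and consequently, for independent centered
unit-variance variables with common fourth moment `λ ≠ 3` and `F = Σⱼ f(j)Yⱼ`,
`sup_k f(k)² ≤ √(|E[F⁴]−3|)/√(|λ−3|)`. -/
theorem stmt5 {Ω : Type*} [MeasurableSpace Ω] (μ : Measure Ω) [IsProbabilityMeasure μ]
    (f : ℕ → ℝ) (hfsum : Summable (fun j => f j ^ 2)) (hf : ∑' j, f j ^ 2 = 1)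
    (Y : ℕ → Ω → ℝ) (hYmeas : ∀ j, Measurable (Y j))
    (hindep : iIndepFun Y μ)
    (hL4 : ∀ j, MemLp (Y j) 4 μ)
    (hmean : ∀ j, ∫ ω, Y j ω ∂μ = 0)
    (hvar : ∀ j, ∫ ω, (Y j ω) ^ 2 ∂μ = 1)
    (lam : ℝ) (h4 : ∀ j, ∫ ω, (Y j ω) ^ 4 ∂μ = lam) (hlam : lam ≠ 3)
    (F : Ω → ℝ) (hF : ∀ ω, F ω = ∑' j, f j * Y j ω)
    (hFae : ∀ᵐ ω ∂μ, Summable (fun j => f j * Y j ω))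
    (hFL4 : MemLp F 4 μ) :
    (⨆ k, f k ^ 2) ^ 2 ≤ ∑' j, f j ^ 4 ∧ ∑' j, f j ^ 4 ≤ ⨆ k, f k ^ 2 ∧
      (⨆ k, f k ^ 2) ≤ Real.sqrt |(∫ ω, (F ω) ^ 4 ∂μ) - 3| / Real.sqrt |lam - 3| := by

  classical
  -- deterministic part
  have hb1 : ∀ k, f k ^ 2 ≤ 1 := by
    intro k
    rw [← hf]
    exact Summable.le_tsum hfsum k (fun j _ => sq_nonneg _)
  have hsum4 : Summable (fun j => f j ^ 4) := by
    refine Summable.of_nonneg_of_le (fun j => by positivity) (fun j => ?_) hfsum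
    nlinarith [sq_nonneg (f j), hb1 j]
  have bdd : BddAbove (Set.range fun k => f k ^ 2) := by
    refine ⟨1, ?_⟩
    rintro _ ⟨k, rfl⟩
    exact hb1 k
  have hsup_nonneg : 0 ≤ ⨆ k, f k ^ 2 :=
    le_trans (sq_nonneg (f 0)) (le_ciSup bdd 0)
  have hT_nonneg : 0 ≤ ∑' j, f j ^ 4 := tsum_nonneg (fun j => by positivity)
  have hsupT : (⨆ k, f k ^ 2) ≤ Real.sqrt (∑' j, f j ^ 4) := by
    refine ciSup_le fun k => ?_
    have h1 : f k ^ 4 ≤ ∑' j, f j ^ 4 := Summable.le_tsum hsum4 k (fun j _ => by positivity)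
    have h2 : f k ^ 2 = Real.sqrt (f k ^ 4) := by
      rw [show f k ^ 4 = (f k ^ 2) ^ 2 by ring, Real.sqrt_sq (sq_nonneg _)]
    rw [h2]
    exact Real.sqrt_le_sqrt h1
  have P1 : (⨆ k, f k ^ 2) ^ 2 ≤ ∑' j, f j ^ 4 := by
    have := pow_le_pow_left₀ hsup_nonneg hsupT 2
    rwa [Real.sq_sqrt hT_nonneg] at this
  have P2 : ∑' j, f j ^ 4 ≤ ⨆ k, f k ^ 2 := by
    have hstep : ∀ j, f j ^ 4 ≤ (⨆ k, f k ^ 2) * f j ^ 2 := by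
      intro j
      have := mul_le_mul_of_nonneg_right (le_ciSup bdd j) (sq_nonneg (f j))
      calc f j ^ 4 = f j ^ 2 * f j ^ 2 := by ring
        _ ≤ (⨆ k, f k ^ 2) * f j ^ 2 := this
    calc ∑' j, f j ^ 4 ≤ ∑' j, (⨆ k, f k ^ 2) * f j ^ 2 :=
          Summable.tsum_le_tsum hstep hsum4 (hfsum.mul_left _)
      _ = (⨆ k, f k ^ 2) * ∑' j, f j ^ 2 := tsum_mul_left
      _ = ⨆ k, f k ^ 2 := by rw [hf, mul_one]
  -- probabilistic part
  set A : ℕ → Ω → ℝ := fun n ω => ∑ j ∈ Finset.range n, f j * Y j ω with hAdef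
  have momP := fun n => aux_moments f Y hYmeas hindep hL4 hmean hvar lam h4 (Finset.range n)
  have momIco := fun n m => aux_moments f Y hYmeas hindep hL4 hmean hvar lam h4 (Finset.Ico n m)
  have intF : Integrable F μ := hFL4.integrable (by norm_num)
  have intF4 : Integrable (fun ω => F ω ^ 4) μ := aux_int_pow hFL4 le_rfl
  have haeTend : ∀ᵐ ω ∂μ, Tendsto (fun n => A n ω) atTop (𝓝 (F ω)) := by
    filter_upwards [hFae] with ω hs
    rw [hF ω]
    exact hs.hasSum.tendsto_sum_nat
  have haeQ : ∀ n, ∀ᵐ ω ∂μ, Tendsto (fun m => ∑ j ∈ Finset.Ico n m, f j * Y j ω) atTop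
      (𝓝 (F ω - A n ω)) := by
    intro n
    filter_upwards [haeTend] with ω h
    have h1 : Tendsto (fun m => A m ω - A n ω) atTop (𝓝 (F ω - A n ω)) := h.sub_const _
    refine h1.congr' ?_
    filter_upwards [eventually_ge_atTop n] with m hm
    exact (Finset.sum_Ico_eq_sub _ hm).symm
  have hS : Tendsto (fun n => ∑ j ∈ Finset.range n, f j ^ 2) atTop (𝓝 1) := by
    simpa [hf] using hfsum.hasSum.tendsto_sum_nat
  have hT : Tendsto (fun n => ∑ j ∈ Finset.range n, f j ^ 4) atTop (𝓝 (∑' j, f j ^ 4)) :=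
    hsum4.hasSum.tendsto_sum_nat
  have tendL : Tendsto (fun n => 3 * (∑ j ∈ Finset.range n, f j ^ 2) ^ 2
      + (lam - 3) * ∑ j ∈ Finset.range n, f j ^ 4) atTop
      (𝓝 (3 + (lam - 3) * ∑' j, f j ^ 4)) := by
    have := ((hS.pow 2).const_mul 3).add (hT.const_mul (lam - 3))
    simpa using this
  -- upper bound by Fatou
  have claim_upper : ∫ ω, F ω ^ 4 ∂μ ≤ 3 + (lam - 3) * ∑' j, f j ^ 4 := by
    refine aux_fatou (G := fun n ω => A n ω ^ 4)
      (fun n => aux_int_pow (momP n).1 le_rfl) (fun n ω => by positivity)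
      (haeTend.mono fun ω h => h.pow 4) intF4 ?_
    have : ∀ n, ∫ ω, A n ω ^ 4 ∂μ = 3 * (∑ j ∈ Finset.range n, f j ^ 2) ^ 2
        + (lam - 3) * ∑ j ∈ Finset.range n, f j ^ 4 := fun n => (momP n).2.2.2
    simp only [this]
    exact tendL
  -- tail second moments
  have hR4 : ∀ n, MemLp (fun ω => F ω - A n ω) 4 μ := fun n => hFL4.sub (momP n).1
  have intAn1 : ∀ n, Integrable (A n) μ := fun n => (momP n).1.integrable (by norm_num)
  have claim_tail : ∀ n, ∫ ω, (F ω - A n ω) ^ 2 ∂μ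
      ≤ 1 - ∑ j ∈ Finset.range n, f j ^ 2 := by
    intro n
    refine aux_fatou (G := fun m ω => (∑ j ∈ Finset.Ico n m, f j * Y j ω) ^ 2)
      (fun m => aux_int_pow (momIco n m).1 (by norm_num)) (fun m ω => by positivity)
      ((haeQ n).mono fun ω h => h.pow 2)
      (((hR4 n).mono_exponent (by norm_num)).integrable_sq) ?_
    have e : ∀ m, ∫ ω, (∑ j ∈ Finset.Ico n m, f j * Y j ω) ^ 2 ∂μ
        = ∑ j ∈ Finset.Ico n m, f j ^ 2 := fun m => (momIco n m).2.2.1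
    simp only [e]
    have h1 : Tendsto (fun m => (∑ j ∈ Finset.range m, f j ^ 2)
        - ∑ j ∈ Finset.range n, f j ^ 2) atTop (𝓝 (1 - ∑ j ∈ Finset.range n, f j ^ 2)) :=
      hS.sub_const _
    refine h1.congr' ?_
    filter_upwards [eventually_ge_atTop n] with m hm
    exact (Finset.sum_Ico_eq_sub _ hm).symm
  -- mean of F is zero
  have hEFn : ∀ n, ∫ ω, (F ω - A n ω) ∂μ = ∫ ω, F ω ∂μ := by
    intro n
    rw [integral_sub intF (intAn1 n), (momP n).2.1, sub_zero]
  have EF0 : ∫ ω, F ω ∂μ = 0 := by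
    have key : ∀ n, (∫ ω, F ω ∂μ) ^ 2 ≤ 1 - ∑ j ∈ Finset.range n, f j ^ 2 := by
      intro n
      have h1 := aux_cs ((hR4 n).mono_exponent (p := 2) (by norm_num))
      rw [hEFn n] at h1
      exact h1.trans (claim_tail n)
    have h2 : Tendsto (fun n => 1 - ∑ j ∈ Finset.range n, f j ^ 2) atTop (𝓝 0) := by
      have := hS.const_sub 1
      simpa using this
    have h3 : (∫ ω, F ω ∂μ) ^ 2 ≤ 0 :=
      le_of_tendsto_of_tendsto' tendsto_const_nhds h2 key
    have h4 : (∫ ω, F ω ∂μ) ^ 2 = 0 := le_antisymm h3 (sq_nonneg _)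
    exact pow_eq_zero_iff (n := 2) (by norm_num) |>.mp h4
  -- lower bound via independence decomposition
  have claim_lower : ∀ n, 3 * (∑ j ∈ Finset.range n, f j ^ 2) ^ 2
      + (lam - 3) * ∑ j ∈ Finset.range n, f j ^ 4 ≤ ∫ ω, F ω ^ 4 ∂μ := by
    intro n
    have hAB : IndepFun (A n) (fun ω => F ω - A n ω) μ :=
      aux_indep_tail f Y hYmeas hindep F n (haeQ n)
    have hER : ∫ ω, (F ω - A n ω) ∂μ = 0 := by rw [hEFn n, EF0]
    obtain ⟨d1, d2, d3⟩ := aux_expand (momP n).1 (hR4 n) hAB (momP n).2.1 hER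
    have e4 : ∫ ω, (A n ω + (F ω - A n ω)) ^ 4 ∂μ = ∫ ω, F ω ^ 4 ∂μ := by
      congr 1
      funext ω
      ring
    rw [e4] at d3
    have hR2nn : 0 ≤ ∫ ω, (F ω - A n ω) ^ 2 ∂μ := integral_nonneg (fun ω => by positivity)
    have hR4nn : 0 ≤ ∫ ω, (F ω - A n ω) ^ 4 ∂μ := integral_nonneg (fun ω => by positivity)
    have hSnn : 0 ≤ ∫ ω, A n ω ^ 2 ∂μ := integral_nonneg (fun ω => by positivity)
    rw [← (momP n).2.2.2]
    nlinarith [d3, mul_nonneg hSnn hR2nn]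
  have claim_lower' : 3 + (lam - 3) * ∑' j, f j ^ 4 ≤ ∫ ω, F ω ^ 4 ∂μ :=
    le_of_tendsto tendL (Eventually.of_forall claim_lower)
  have hI : ∫ ω, F ω ^ 4 ∂μ = 3 + (lam - 3) * ∑' j, f j ^ 4 :=
    le_antisymm claim_upper claim_lower'
  -- final assembly
  refine ⟨P1, P2, ?_⟩
  have habs : |(∫ ω, F ω ^ 4 ∂μ) - 3| = |lam - 3| * ∑' j, f j ^ 4 := by
    rw [hI, show 3 + (lam - 3) * ∑' j, f j ^ 4 - 3 = (lam - 3) * ∑' j, f j ^ 4 by ring,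
      abs_mul, abs_of_nonneg hT_nonneg]
  have hlampos : 0 < |lam - 3| := abs_pos.mpr (sub_ne_zero.mpr hlam)
  have hsq : Real.sqrt (|lam - 3| * ∑' j, f j ^ 4) / Real.sqrt |lam - 3|
      = Real.sqrt (∑' j, f j ^ 4) := by
    rw [Real.sqrt_mul (abs_nonneg _), mul_comm, mul_div_assoc,
      div_self (ne_of_gt (Real.sqrt_pos.mpr hlampos)), mul_one]
  rw [habs, hsq]
  exact hsupT
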